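/- Let n ≥ 2 and 1 ≤ i ≤ n−1 be integers, d = gcd(i,n), r = n/d. Let a₁ ≥ a₂ ≥ ⋯ ≥ a_d be integers and let μ ∈ ℤⁿ be the vector in which each a_k is repeated r consecutive times. Let 1 ≤ k ≤ d−1 be an index with a_k > a_{k+1}, and let ν_k ∈ ℚⁿ be obtained from μ by replacing the 2r entries of blocks k and k+1 by (a_k + a_{k+1})/2. Then: ν_k is an i-twisted Newton vector; P̃_{ν_k}(j) ≤ P̃_μ(j) for all 1 ≤ j ≤ n−1 and P̃_{ν_k}(n) = P̃_μ(n); P̃_μ(rk) − P̃_{ν_k}(rk) = r(a_k − a_{k+1})/2 ≥ 1; and 𝐢(ν_k, μ) + 𝐛₁(ν_k, μ) ≥ 1. (This is the intermediate claim in the proof of Proposition 4.9: Ess-gap_{[0,n]}(ν̃_k, μ̃) ≥ 1.) -/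

import Mathlib

/-- Shifted partial sum `P̃_ν(j) = ν₁ + ⋯ + ν_j + j·i/n` (0-indexed entries). -/
def newtonPT (n i : ℕ) (ν : ℕ → ℚ) (j : ℕ) : ℚ :=
  (∑ k ∈ Finset.range j, ν k) + (j : ℚ) * (i : ℚ) / (n : ℚ)

/-- A rational number is an integer. -/
def IsIntQ (q : ℚ) : Prop := ∃ m : ℤ, (m : ℚ) = q

/-- `ν` is an `i`-twisted Newton vector (of length `n`): weakly decreasing, integral shifted
total sum, and integral shifted partial sum at every breakpoint. -/
def IsTwNewton (n i : ℕ) (ν : ℕ → ℚ) : Prop :=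
  (∀ k, k + 1 < n → ν (k + 1) ≤ ν k) ∧
  IsIntQ (newtonPT n i ν n) ∧
  ∀ j, 1 ≤ j → j ≤ n - 1 → ν (j - 1) ≠ ν j → IsIntQ (newtonPT n i ν j)

/-- `𝐢(ν,ν')`: the number of lattice points strictly between the two shifted Newton polygons. -/
noncomputable def nIT (n i : ℕ) (ν ν' : ℕ → ℚ) : ℕ :=
  Set.ncard {p : ℕ × ℤ | 1 ≤ p.1 ∧ p.1 ≤ n - 1 ∧
    newtonPT n i ν p.1 < (p.2 : ℚ) ∧ (p.2 : ℚ) < newtonPT n i ν' p.1}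

/-- `𝐛₁(ν,ν')`: lattice points on the lower shifted polygon not lying on the upper one. -/
noncomputable def nB1T (n i : ℕ) (ν ν' : ℕ → ℚ) : ℕ :=
  Set.ncard {j : ℕ | 1 ≤ j ∧ j ≤ n - 1 ∧ IsIntQ (newtonPT n i ν j) ∧
    newtonPT n i ν j < newtonPT n i ν' j}

/-- `𝐛₂(ν,ν')`: lattice points on the upper shifted polygon not lying on the lower one. -/
noncomputable def nB2T (n i : ℕ) (ν ν' : ℕ → ℚ) : ℕ :=
  Set.ncard {j : ℕ | 1 ≤ j ∧ j ≤ n - 1 ∧ IsIntQ (newtonPT n i ν' j) ∧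
    newtonPT n i ν j < newtonPT n i ν' j}

/-- Sum of the indicator of `l < X` over `range j` is `min j X`. -/
lemma indSum (X j : ℕ) :
    (∑ l ∈ Finset.range j, if l < X then (1:ℚ) else 0) = ((min j X : ℕ) : ℚ) := by
  induction j with
  | zero => simp
  | succ j ih =>
    rw [Finset.sum_range_succ, ih]
    by_cases h : j < X
    · have : min (j+1) X = min j X + 1 := by omega
      rw [if_pos h, this]; push_cast; ring
    · have : min (j+1) X = min j X := by omega
      rw [if_neg h, this]; ring

/-- intermediate claim in the proof of Proposition 4.9: with `μ` the
`r`-block vector of the weakly decreasing integers `a₀ ≥ ⋯ ≥ a_{d−1}`, if two adjacent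
block values satisfy `a_k > a_{k+1}` (0-indexed) and `ν` is obtained from `μ` by replacing
the `2r` entries of blocks `k` and `k+1` by `(a_k + a_{k+1})/2`, then `ν` is an `i`-twisted
Newton vector, `ν ≤ μ`, the gap at `j = r(k+1)` is `r(a_k − a_{k+1})/2 ≥ 1`, and
`𝐢(ν,μ) + 𝐛₁(ν,μ) ≥ 1`. -/
theorem essGap_of_averaged_blocks (n i : ℕ) (hn : 2 ≤ n) (hi1 : 1 ≤ i)
    (hi2 : i ≤ n - 1) (d r : ℕ) (hd : d = Nat.gcd i n) (hr : r = n / d)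
    (a : ℕ → ℤ) (ha : ∀ l, l + 1 < d → a (l + 1) ≤ a l)
    (μ : ℕ → ℚ) (hμ : ∀ l, l < n → μ l = ((a (l / r) : ℤ) : ℚ))
    (k : ℕ) (hk : k + 1 < d) (hak : a (k + 1) < a k)
    (ν : ℕ → ℚ)
    (hν : ∀ l, l < n → ν l =
      if l / r = k ∨ l / r = k + 1 then ((a k : ℚ) + (a (k + 1) : ℚ)) / 2
      else ((a (l / r) : ℤ) : ℚ)) :
    IsTwNewton n i ν ∧
    (∀ j, 1 ≤ j → j ≤ n - 1 → newtonPT n i ν j ≤ newtonPT n i μ j) ∧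
    newtonPT n i ν n = newtonPT n i μ n ∧
    newtonPT n i μ (r * (k + 1)) - newtonPT n i ν (r * (k + 1)) =
      (r : ℚ) * ((a k : ℚ) - (a (k + 1) : ℚ)) / 2 ∧
    1 ≤ (r : ℚ) * ((a k : ℚ) - (a (k + 1) : ℚ)) / 2 ∧
    1 ≤ nIT n i ν μ + nB1T n i ν μ := by
  -- basic numerics
  have hdi : d ∣ i := hd ▸ Nat.gcd_dvd_left i n
  have hdn : d ∣ n := hd ▸ Nat.gcd_dvd_right i n
  have hd0 : 0 < d := by
    rcases Nat.eq_zero_or_pos d with h | h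
    · exfalso; rw [h] at hdi; simp at hdi; omega
    · exact h
  have hnrd : n = r * d := by
    rw [hr]; exact (Nat.div_mul_cancel hdn).symm
  have hdlei : d ≤ i := Nat.le_of_dvd (by omega) hdi
  have hr2 : 2 ≤ r := by
    rcases Nat.lt_or_ge r 2 with h | h
    · interval_cases r <;> omega
    · exact h
  have hr0 : 0 < r := by omega
  obtain ⟨e, he⟩ := hdi
  have hkd : k + 2 ≤ d := by omega
  have hrkn : r * (k + 2) ≤ n := by
    rw [hnrd]; exact Nat.mul_le_mul_left r hkd
  have hakQ : (a (k+1) : ℚ) < (a k : ℚ) := by exact_mod_cast hak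
  -- the crucial sum-difference formula
  have key : ∀ j, j ≤ n →
      (∑ l ∈ Finset.range j, μ l) - (∑ l ∈ Finset.range j, ν l)
        = ((a k : ℚ) - (a (k+1) : ℚ)) / 2 *
          (2 * ((min j (r*(k+1)) : ℕ) : ℚ) - ((min j (r*k) : ℕ) : ℚ)
            - ((min j (r*(k+2)) : ℕ) : ℚ)) := by
    intro j hj
    rw [← Finset.sum_sub_distrib]
    have step : ∀ l ∈ Finset.range j, μ l - ν l
        = ((a k : ℚ) - (a (k+1) : ℚ)) / 2 *
          (2 * (if l < r*(k+1) then (1:ℚ) else 0) - (if l < r*k then (1:ℚ) else 0)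
            - (if l < r*(k+2) then (1:ℚ) else 0)) := by
      intro l hl
      have hln : l < n := lt_of_lt_of_le (Finset.mem_range.mp hl) hj
      rw [hμ l hln, hν l hln]
      have c1 : l < r*k ↔ l / r < k := by rw [mul_comm]; exact (Nat.div_lt_iff_lt_mul hr0).symm
      have c2 : l < r*(k+1) ↔ l / r < k+1 := by
        rw [mul_comm]; exact (Nat.div_lt_iff_lt_mul hr0).symm
      have c3 : l < r*(k+2) ↔ l / r < k+2 := by
        rw [mul_comm]; exact (Nat.div_lt_iff_lt_mul hr0).symm
      simp only [c1, c2, c3]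
      by_cases h1 : l / r = k
      · rw [if_pos (Or.inl h1), h1, if_pos (show k < k+1 by omega),
          if_neg (show ¬ k < k by omega), if_pos (show k < k+2 by omega)]
        ring
      · by_cases h2 : l / r = k + 1
        · rw [if_pos (Or.inr h2), h2, if_neg (show ¬ k+1 < k+1 by omega),
            if_neg (show ¬ k+1 < k by omega), if_pos (show k+1 < k+2 by omega)]
          ring
        · rw [if_neg (by tauto)]
          rcases Nat.lt_or_ge (l / r) k with h3 | h3
          · rw [if_pos (show l/r < k+1 by omega), if_pos h3,
              if_pos (show l/r < k+2 by omega)]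
            ring
          · rw [if_neg (show ¬ l/r < k+1 by omega), if_neg (show ¬ l/r < k by omega),
              if_neg (show ¬ l/r < k+2 by omega)]
            ring
    rw [Finset.sum_congr rfl step, ← Finset.mul_sum]
    congr 1
    rw [Finset.sum_sub_distrib, Finset.sum_sub_distrib, ← Finset.mul_sum,
      indSum, indSum, indSum]
  -- integrality of μ's shifted partial sums at block boundaries
  have keyInt : ∀ m : ℕ, r * m ≤ n → IsIntQ (newtonPT n i μ (r*m)) := by
    intro m hm
    refine ⟨(∑ l ∈ Finset.range (r*m), a (l / r)) + (m : ℤ) * (e : ℤ), ?_⟩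
    have hsum : (∑ l ∈ Finset.range (r*m), μ l)
        = ((∑ l ∈ Finset.range (r*m), a (l / r) : ℤ) : ℚ) := by
      push_cast
      exact Finset.sum_congr rfl fun l hl =>
        hμ l (lt_of_lt_of_le (Finset.mem_range.mp hl) hm)
    have hshift : ((r*m : ℕ) : ℚ) * (i : ℚ) / (n : ℚ) = (m : ℚ) * (e : ℚ) := by
      have hi' : (i : ℚ) = (d : ℚ) * (e : ℚ) := by exact_mod_cast he
      have hn' : (n : ℚ) = (r : ℚ) * (d : ℚ) := by exact_mod_cast hnrd
      have hrQ : (r : ℚ) ≠ 0 := by positivity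
      have hdQ : (d : ℚ) ≠ 0 := by positivity
      rw [hi', hn']; push_cast; field_simp
    unfold newtonPT
    rw [hsum, hshift]; push_cast; ring
  -- ν agrees with μ at block boundaries away from k+1
  have keyEq : ∀ m : ℕ, (m ≤ k ∨ k + 2 ≤ m) → r * m ≤ n →
      newtonPT n i ν (r*m) = newtonPT n i μ (r*m) := by
    intro m hm hmn
    have hD : 2 * ((min (r*m) (r*(k+1)) : ℕ) : ℚ) - ((min (r*m) (r*k) : ℕ) : ℚ)
        - ((min (r*m) (r*(k+2)) : ℕ) : ℚ) = 0 := by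
      rcases hm with hm | hm
      · have h1 : r*m ≤ r*k := Nat.mul_le_mul_left r hm
        have hk0 : r*k + r = r*(k+1) := by ring
        have hk1 : r*(k+1) + r = r*(k+2) := by ring
        have e1 : min (r*m) (r*k) = r*m := by omega
        have e2 : min (r*m) (r*(k+1)) = r*m := by omega
        have e3 : min (r*m) (r*(k+2)) = r*m := by omega
        rw [e1, e2, e3]; ring
      · have h1 : r*(k+2) ≤ r*m := Nat.mul_le_mul_left r hm
        have hk0 : r*k + r = r*(k+1) := by ring
        have hk1 : r*(k+1) + r = r*(k+2) := by ring
        have e1 : min (r*m) (r*k) = r*k := by omega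
        have e2 : min (r*m) (r*(k+1)) = r*(k+1) := by omega
        have e3 : min (r*m) (r*(k+2)) = r*(k+2) := by omega
        rw [e1, e2, e3]
        push_cast; ring
    have hkey := key (r*m) hmn
    rw [hD, mul_zero, sub_eq_zero] at hkey
    unfold newtonPT
    rw [hkey]
  -- nonnegativity of the difference
  have hle : ∀ j, j ≤ n → newtonPT n i ν j ≤ newtonPT n i μ j := by
    intro j hj
    have hkey := key j hj
    have hk0 : r*k + r = r*(k+1) := by ring
    have hk1 : r*(k+1) + r = r*(k+2) := by ring
    have hmin : (min j (r*k)) + min j (r*(k+2)) ≤ 2 * min j (r*(k+1)) := by omega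
    have hminQ : ((min j (r*k) : ℕ) : ℚ) + ((min j (r*(k+2)) : ℕ) : ℚ)
        ≤ 2 * ((min j (r*(k+1)) : ℕ) : ℚ) := by exact_mod_cast hmin
    have h0 : 0 ≤ (∑ l ∈ Finset.range j, μ l) - (∑ l ∈ Finset.range j, ν l) := by
      rw [hkey]
      apply mul_nonneg
      · linarith
      · linarith
    unfold newtonPT
    linarith
  -- the gap at j₀ = r(k+1)
  have hj0n : r * (k+1) ≤ n := by
    calc r * (k+1) ≤ r * (k+2) := Nat.mul_le_mul_left r (by omega)
    _ ≤ n := hrkn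
  have hgap : newtonPT n i μ (r*(k+1)) - newtonPT n i ν (r*(k+1))
      = (r : ℚ) * ((a k : ℚ) - (a (k+1) : ℚ)) / 2 := by
    have hkey := key (r*(k+1)) hj0n
    have hk0 : r*k + r = r*(k+1) := by ring
    have hk1 : r*(k+1) + r = r*(k+2) := by ring
    have e1 : min (r*(k+1)) (r*k) = r*k := by omega
    have e2 : min (r*(k+1)) (r*(k+1)) = r*(k+1) := by omega
    have e3 : min (r*(k+1)) (r*(k+2)) = r*(k+1) := by omega
    rw [e1, e2, e3] at hkey
    have h4 : 2 * ((r*(k+1) : ℕ) : ℚ) - ((r*k : ℕ) : ℚ) - ((r*(k+1) : ℕ) : ℚ)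
        = (r : ℚ) := by push_cast; ring
    rw [h4] at hkey
    unfold newtonPT
    have : (∑ l ∈ Finset.range (r*(k+1)), μ l) + ((r*(k+1) : ℕ) : ℚ) * (i:ℚ) / (n:ℚ)
        - ((∑ l ∈ Finset.range (r*(k+1)), ν l) + ((r*(k+1) : ℕ) : ℚ) * (i:ℚ) / (n:ℚ))
        = (∑ l ∈ Finset.range (r*(k+1)), μ l) - (∑ l ∈ Finset.range (r*(k+1)), ν l) := by
      ring
    rw [this, hkey]; ring
  have hone : (1 : ℚ) ≤ (r : ℚ) * ((a k : ℚ) - (a (k+1) : ℚ)) / 2 := by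
    have h0 : a (k+1) + 1 ≤ a k := hak
    have h1 : (a (k+1) : ℚ) + 1 ≤ (a k : ℚ) := by exact_mod_cast h0
    have h2 : (2 : ℚ) ≤ (r : ℚ) := by exact_mod_cast hr2
    nlinarith
  -- monotonicity of ν
  have hmono : ∀ l, l + 1 < n → ν (l + 1) ≤ ν l := by
    intro l hl
    rw [hν l (by omega), hν (l+1) hl]
    have hq1 : l / r ≤ (l+1) / r := Nat.div_le_div_right (by omega)
    have hq2 : (l+1) / r ≤ l / r + 1 := by
      calc (l+1)/r ≤ (l+r)/r := Nat.div_le_div_right (by omega)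
      _ = l/r + 1 := Nat.add_div_right l hr0
    have hdr : d * r = n := by rw [hnrd]; ring
    have hqd : (l+1) / r < d := by
      rw [Nat.div_lt_iff_lt_mul hr0]
      omega
    rcases (show (l+1)/r = l/r ∨ (l+1)/r = l/r + 1 by omega) with h | h
    · rw [h]
    · rw [h] at hqd ⊢
      split_ifs with h1 h2 h2
      · exact le_rfl
      · -- l/r + 1 ∈ {k, k+1}, l/r ∉ : must have l/r + 1 = k
        have hq1k : l/r + 1 = k := by
          rcases h1 with h1 | h1
          · exact h1
          · exact absurd (Or.inl (by omega)) h2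
        have h5 : a (l/r + 1) ≤ a (l/r) := ha (l/r) (by omega)
        have h5Q : (a (l/r + 1) : ℚ) ≤ (a (l/r) : ℚ) := by exact_mod_cast h5
        rw [hq1k] at h5Q
        linarith
      · -- l/r ∈ {k, k+1}, l/r + 1 ∉ : must have l/r = k+1
        have hqk : l/r = k + 1 := by
          rcases h2 with h2 | h2
          · exact absurd (Or.inr (by omega)) h1
          · exact h2
        have h5 : a (l/r + 1) ≤ a (l/r) := ha (l/r) (by omega)
        have h5Q : (a (l/r + 1) : ℚ) ≤ (a (l/r) : ℚ) := by exact_mod_cast h5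
        rw [hqk] at h5Q ⊢
        linarith
      · have h5 : a (l/r + 1) ≤ a (l/r) := ha (l/r) (by omega)
        exact_mod_cast h5
  -- total shifted sum of ν is integral, and equals that of μ
  have hEqTop : newtonPT n i ν n = newtonPT n i μ n := by
    have := keyEq d (Or.inr hkd) (le_of_eq hnrd.symm)
    rwa [← hnrd] at this
  have hIntTop : IsIntQ (newtonPT n i ν n) := by
    rw [hEqTop]
    have := keyInt d (le_of_eq hnrd.symm)
    rwa [← hnrd] at this
  -- breakpoint integrality
  have hBreak : ∀ j, 1 ≤ j → j ≤ n - 1 → ν (j - 1) ≠ ν j → IsIntQ (newtonPT n i ν j) := by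
    intro j hj1 hjn1 hne
    have hjn : j < n := by omega
    have hj1n : j - 1 < n := by omega
    have hdvd : r ∣ j := by
      by_contra hnd
      have hs0 : j % r ≠ 0 := fun h => hnd (Nat.dvd_of_mod_eq_zero h)
      have hmod := Nat.div_add_mod j r
      have hsr : j % r < r := Nat.mod_lt j hr0
      have hj1eq : j - 1 = r * (j / r) + (j % r - 1) := by omega
      have : (j-1) / r = j / r := by
        rw [hj1eq, Nat.mul_add_div hr0, Nat.div_eq_of_lt (show j % r - 1 < r by omega)]; omega
      exact hne (by rw [hν _ hj1n, hν _ hjn, this])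
    obtain ⟨m, hm⟩ := hdvd
    have hmn : r * m ≤ n := by omega
    have hmne : m ≠ k + 1 := by
      intro hmk
      have hj1eq : j - 1 = r * k + (r - 1) := by
        rw [hm, hmk]; have : r*(k+1) = r*k + r := by ring
        omega
      have hd1 : (j-1) / r = k := by
        rw [hj1eq, Nat.mul_add_div hr0, Nat.div_eq_of_lt (show r - 1 < r by omega)]; omega
      have hd2 : j / r = k + 1 := by
        rw [hm, hmk, Nat.mul_div_cancel_left _ hr0]
      exact hne (by rw [hν _ hj1n, hν _ hjn, hd1, hd2,
        if_pos (Or.inl rfl), if_pos (Or.inr rfl)])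
    have hcase : m ≤ k ∨ k + 2 ≤ m := by omega
    rw [hm, keyEq m hcase hmn]
    exact keyInt m hmn
  refine ⟨⟨hmono, hIntTop, hBreak⟩, fun j h1 h2 => hle j (by omega), hEqTop, hgap, hone, ?_⟩
  -- the counting claim
  have hj01 : 1 ≤ r * (k+1) := Nat.one_le_iff_ne_zero.mpr (by positivity)
  have hj0n1 : r * (k+1) ≤ n - 1 := by
    have hk1 : r*(k+1) + r = r*(k+2) := by ring
    omega
  have hgapge : (1:ℚ) ≤ newtonPT n i μ (r*(k+1)) - newtonPT n i ν (r*(k+1)) := by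
    rw [hgap]; exact hone
  by_cases hint : IsIntQ (newtonPT n i ν (r*(k+1)))
  · have hfin : {j : ℕ | 1 ≤ j ∧ j ≤ n - 1 ∧ IsIntQ (newtonPT n i ν j) ∧
        newtonPT n i ν j < newtonPT n i μ j}.Finite :=
      Set.Finite.subset (Set.finite_Icc 1 (n-1)) (fun x hx => ⟨hx.1, hx.2.1⟩)
    have hpos : 0 < nB1T n i ν μ := by
      unfold nB1T
      exact (Set.ncard_pos hfin).mpr ⟨r*(k+1), hj01, hj0n1, hint, by linarith⟩
    omega
  · set x := newtonPT n i ν (r*(k+1)) with hx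
    have hfl : (⌊x⌋ : ℚ) < x :=
      lt_of_le_of_ne (Int.floor_le x) (fun hh => hint ⟨⌊x⌋, hh⟩)
    have hflu : x < (⌊x⌋ : ℚ) + 1 := Int.lt_floor_add_one x
    have hfin : {p : ℕ × ℤ | 1 ≤ p.1 ∧ p.1 ≤ n - 1 ∧
        newtonPT n i ν p.1 < (p.2 : ℚ) ∧ (p.2 : ℚ) < newtonPT n i μ p.1}.Finite := by
      apply Set.Finite.subset (Set.Finite.biUnion (Set.finite_Icc 1 (n-1))
        (fun j _ => (Set.finite_Icc ⌈newtonPT n i ν j⌉ ⌊newtonPT n i μ j⌋).image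
          (fun m => (j, m))))
      rintro ⟨j, m⟩ ⟨h1, h2, h3, h4⟩
      exact Set.mem_biUnion (⟨h1, h2⟩ : j ∈ Set.Icc 1 (n-1))
        ⟨m, ⟨Int.ceil_le.mpr h3.le, Int.le_floor.mpr h4.le⟩, rfl⟩
    have hpos : 0 < nIT n i ν μ := by
      unfold nIT
      refine (Set.ncard_pos hfin).mpr ⟨(r*(k+1), ⌊x⌋ + 1), hj01, hj0n1, ?_, ?_⟩
      · push_cast; linarith
      · push_cast; linarith
    omega
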